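/- Let N ≥ 1 and let A be an N×N matrix with entries in {0,1}, regarded as an integer matrix, and assume A is irreducible and not a permutation matrix. The map ℤ^N → ℤ^{N+1}, x ↦ (0, x), sends the subgroup (I−Â)ℤ^N into (I−A_1)ℤ^{N+1}, and it induces a group isomorphism ξ^0 : ℤ^N/(I−Â)ℤ^N → ℤ^{N+1}/(I−A_1)ℤ^{N+1} satisfying: (i) ξ^0 ∘ ι̂_A = ι_{A_1}; (ii) q_{A_1} ∘ ξ^0 = q̂_A; and (iii) ξ^0(ι̂_A(1) + [1_N]) = [1_{N+1}], where 1_N = (1,…,1) ∈ ℤ^N and 1_{N+1} = (1,…,1) ∈ ℤ^{N+1}. -/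

import Mathlib

open Matrix

noncomputable section

/-- `A` has entries in `{0,1}`. -/
def ZeroOneEntries {N : ℕ} (A : Matrix (Fin N) (Fin N) ℤ) : Prop :=
  ∀ i j, A i j = 0 ∨ A i j = 1

/-- `A` is irreducible: for all `i j` there is `m ≥ 1` with `(A^m) i j ≥ 1`. -/
def IsIrreducibleMatrix {N : ℕ} (A : Matrix (Fin N) (Fin N) ℤ) : Prop :=
  ∀ i j, ∃ m : ℕ, 1 ≤ m ∧ 1 ≤ (A ^ m) i j

/-- `A` is a permutation matrix: every row and column has exactly one nonzero entry. -/
def IsPermutationMatrix {N : ℕ} (A : Matrix (Fin N) (Fin N) ℤ) : Prop :=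
  (∀ i, ∃! j, A i j ≠ 0) ∧ (∀ j, ∃! i, A i j ≠ 0)

/-- The matrix `R₁` whose first row is `(1,…,1)` and whose other rows vanish. -/
def R1 (N : ℕ) [NeZero N] : Matrix (Fin N) (Fin N) ℤ :=
  Matrix.of fun i _ => if i = 0 then 1 else 0

/-- `Â = A + R₁ - A·R₁`. -/
def Ahat {N : ℕ} [NeZero N] (A : Matrix (Fin N) (Fin N) ℤ) : Matrix (Fin N) (Fin N) ℤ :=
  A + R1 N - A * R1 N

/-- The subgroup `Mℤ^N = {Mx : x ∈ ℤ^N}` of `ℤ^N`. -/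
abbrev colSpan {N : ℕ} (M : Matrix (Fin N) (Fin N) ℤ) : Submodule ℤ (Fin N → ℤ) :=
  LinearMap.range M.mulVecLin

/-- The quotient group `ℤ^N / Mℤ^N`. -/
abbrev MQuot {N : ℕ} (M : Matrix (Fin N) (Fin N) ℤ) := (Fin N → ℤ) ⧸ colSpan M

/-- `s_A : ℤ^N → ℤ`, sum of coordinates. -/
def sA (N : ℕ) : (Fin N → ℤ) →ₗ[ℤ] ℤ := ∑ i : Fin N, LinearMap.proj i

lemma sA_apply {N : ℕ} (x : Fin N → ℤ) : sA N x = ∑ i, x i := by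
  simp [sA]

/-- `e₁ = (1,0,…,0) ∈ ℤ^N`. -/
def e1 (N : ℕ) [NeZero N] : Fin N → ℤ := Pi.single 0 1

/-- `i₁ : ℤ → ℤ^N`, `m ↦ (m,0,…,0)`. -/
def i1 (N : ℕ) [NeZero N] : ℤ →ₗ[ℤ] (Fin N → ℤ) :=
  LinearMap.toSpanSingleton ℤ _ (e1 N)

/-- `j_A : ℤ^N → ℤ^N`,
`(l₁,…,l_N) ↦ (-∑_{i=2}^N l_i, l₂, …, l_N)`. -/
def jA (N : ℕ) [NeZero N] : (Fin N → ℤ) →ₗ[ℤ] (Fin N → ℤ) where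
  toFun l := fun i => if i = 0 then -∑ k ∈ Finset.univ.erase 0, l k else l i
  map_add' a b := by
    funext i
    by_cases h : i = 0
    · simp only [h, reduceIte, Pi.add_apply, Finset.sum_add_distrib]
      ring
    · simp [h]
  map_smul' c a := by
    funext i
    by_cases h : i = 0 <;>
      simp [h, Finset.mul_sum, smul_eq_mul, mul_neg, mul_sub]

/-- The matrix `A₁` of size `N+1`, with first row `(1,…,1)`, first column `(1,0,…,0)ᵗ`,
and lower-right `N×N` block `A`. -/
def A1 {N : ℕ} (A : Matrix (Fin N) (Fin N) ℤ) : Matrix (Fin (N+1)) (Fin (N+1)) ℤ :=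
  Matrix.of fun i j =>
    Fin.cases 1 (fun i' => Fin.cases 0 (fun j' => A i' j') j) i

/-- `ℤ^N → ℤ^{N+1}`, `x ↦ (0, x)`. -/
def ext0 {N : ℕ} : (Fin N → ℤ) →ₗ[ℤ] (Fin (N+1) → ℤ) where
  toFun x := Fin.cons 0 x
  map_add' a b := by
    funext i
    refine Fin.cases ?_ (fun i' => ?_) i <;> simp
  map_smul' c a := by
    funext i
    refine Fin.cases ?_ (fun i' => ?_) i <;> simp

/-- `ℤ^{N+1} → ℤ^N`, deleting the first coordinate. -/
def tailL {N : ℕ} : (Fin (N+1) → ℤ) →ₗ[ℤ] (Fin N → ℤ) :=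
  LinearMap.funLeft ℤ ℤ Fin.succ

lemma sA_e1 {N : ℕ} [NeZero N] : sA N (e1 N) = 1 := by
  simp [sA_apply, e1, Pi.single_apply]

lemma R1_mulVec {N : ℕ} [NeZero N] (x : Fin N → ℤ) :
    (R1 N).mulVec x = (sA N x) • e1 N := by
  funext i
  by_cases h : i = 0 <;>
    simp [R1, e1, Matrix.mulVec, dotProduct, sA_apply, Pi.single_apply, h]

lemma jA_eq' {N : ℕ} [NeZero N] (x : Fin N → ℤ) :
    jA N x = x - (sA N x) • e1 N := by
  funext i
  by_cases h : i = 0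
  · subst h
    simp only [jA, LinearMap.coe_mk, AddHom.coe_mk, reduceIte, Pi.sub_apply, Pi.smul_apply,
      smul_eq_mul, sA_apply, e1, Pi.single_eq_same, mul_one]
    rw [← Finset.add_sum_erase _ x (Finset.mem_univ 0)]
    ring
  · simp [jA, e1, Pi.single_apply, h]

lemma jA_eq_mulVec {N : ℕ} [NeZero N] (x : Fin N → ℤ) :
    jA N x = (1 - R1 N).mulVec x := by
  rw [jA_eq', Matrix.sub_mulVec, Matrix.one_mulVec, R1_mulVec]

lemma one_sub_Ahat {N : ℕ} [NeZero N] (A : Matrix (Fin N) (Fin N) ℤ) :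
    1 - Ahat A = (1 - A) * (1 - R1 N) := by
  unfold Ahat
  noncomm_ring

lemma colSpan_Ahat_le {N : ℕ} [NeZero N] (A : Matrix (Fin N) (Fin N) ℤ) :
    colSpan (1 - Ahat A) ≤ colSpan (1 - A) := by
  rintro _ ⟨x, rfl⟩
  refine ⟨(1 - R1 N).mulVec x, ?_⟩
  rw [mulVecLin_apply, mulVecLin_apply, one_sub_Ahat, ← Matrix.mulVec_mulVec]

/-- `q̂_A : ℤ^N/(I-Â)ℤ^N → ℤ^N/(I-A)ℤ^N`, induced by the identity map of `ℤ^N`. -/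
def qHat {N : ℕ} [NeZero N] (A : Matrix (Fin N) (Fin N) ℤ) :
    MQuot (1 - Ahat A) →ₗ[ℤ] MQuot (1 - A) :=
  Submodule.liftQ _ (colSpan (1 - A)).mkQ
    (by simpa [Submodule.ker_mkQ] using colSpan_Ahat_le A)

/-- `ι̂_A : ℤ → ℤ^N/(I-Â)ℤ^N`, `m ↦ [(I-A)(m·e₁)]`. -/
def iotaHat {N : ℕ} [NeZero N] (A : Matrix (Fin N) (Fin N) ℤ) :
    ℤ →ₗ[ℤ] MQuot (1 - Ahat A) :=
  (colSpan (1 - Ahat A)).mkQ ∘ₗ (1 - A).mulVecLin ∘ₗ i1 N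

lemma e1_mem_kerHat {N : ℕ} [NeZero N] (A : Matrix (Fin N) (Fin N) ℤ) :
    e1 N ∈ LinearMap.ker (1 - Ahat A).mulVecLin := by
  rw [LinearMap.mem_ker, mulVecLin_apply, one_sub_Ahat, ← Matrix.mulVec_mulVec]
  have : (1 - R1 N).mulVec (e1 N) = 0 := by
    rw [Matrix.sub_mulVec, Matrix.one_mulVec, R1_mulVec, sA_e1, one_smul, sub_self]
  rw [this, Matrix.mulVec_zero]

lemma jA_mem_ker {N : ℕ} [NeZero N] (A : Matrix (Fin N) (Fin N) ℤ) (x : Fin N → ℤ)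
    (hx : x ∈ LinearMap.ker (1 - Ahat A).mulVecLin) :
    jA N x ∈ LinearMap.ker (1 - A).mulVecLin := by
  rw [LinearMap.mem_ker, mulVecLin_apply] at *
  rw [jA_eq_mulVec, Matrix.mulVec_mulVec, ← one_sub_Ahat]
  exact hx

lemma sA_jA {N : ℕ} [NeZero N] (x : Fin N → ℤ) : sA N (jA N x) = 0 := by
  rw [jA_eq', map_sub, LinearMap.map_smul, sA_e1, smul_eq_mul, mul_one, sub_self]

lemma jA_e1 {N : ℕ} [NeZero N] : jA N (e1 N) = 0 := by
  rw [jA_eq', sA_e1, one_smul, sub_self]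

lemma tailL_key {N : ℕ} (A : Matrix (Fin N) (Fin N) ℤ) (x : Fin (N+1) → ℤ) :
    tailL ((1 - A1 A).mulVec x) = (1 - A).mulVec (tailL x) := by
  funext i
  simp only [tailL, LinearMap.funLeft_apply, Function.comp, Matrix.mulVec, dotProduct,
    Matrix.sub_apply, Matrix.one_apply, A1, Matrix.of_apply, Fin.cases_succ,
    sub_mul, Finset.sum_sub_distrib]
  congr 1
  · rw [Fin.sum_univ_succ]
    simp [Fin.succ_ne_zero, Fin.succ_inj]
  · rw [Fin.sum_univ_succ]
    simp

/-- `ι_{A₁} : ℤ → ℤ^{N+1}/(I-A₁)ℤ^{N+1}`, `m ↦ [(0, (I-A)(m·e₁))]`. -/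
def iotaA1 {N : ℕ} [NeZero N] (A : Matrix (Fin N) (Fin N) ℤ) :
    ℤ →ₗ[ℤ] MQuot (1 - A1 A) :=
  (colSpan (1 - A1 A)).mkQ ∘ₗ ext0 ∘ₗ (1 - A).mulVecLin ∘ₗ i1 N

/-- `q_{A₁} : ℤ^{N+1}/(I-A₁)ℤ^{N+1} → ℤ^N/(I-A)ℤ^N`, induced by deleting the
first coordinate. -/
def qA1 {N : ℕ} (A : Matrix (Fin N) (Fin N) ℤ) :
    MQuot (1 - A1 A) →ₗ[ℤ] MQuot (1 - A) :=
  Submodule.liftQ _ ((colSpan (1 - A)).mkQ ∘ₗ tailL) (by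
    rintro _ ⟨x, rfl⟩
    simp only [LinearMap.mem_ker, LinearMap.comp_apply, mulVecLin_apply]
    rw [tailL_key]
    exact (Submodule.Quotient.mk_eq_zero _).2 ⟨tailL x, rfl⟩)


lemma ext0_apply {N : ℕ} (x : Fin N → ℤ) : ext0 x = Fin.cons 0 x := rfl

lemma tailL_cons {N : ℕ} (a : ℤ) (y : Fin N → ℤ) : tailL (Fin.cons a y) = y := by
  funext i; simp [tailL]

lemma tailL_ext0 {N : ℕ} (x : Fin N → ℤ) : tailL (ext0 x) = x := by
  rw [ext0_apply, tailL_cons]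

lemma mulVec_A1 {N : ℕ} (A : Matrix (Fin N) (Fin N) ℤ) (x : Fin (N+1) → ℤ) :
    (1 - A1 A).mulVec x = Fin.cons (-(sA N (tailL x))) ((1 - A).mulVec (tailL x)) := by
  funext i
  refine Fin.cases ?_ (fun i' => ?_) i
  · simp only [Fin.cons_zero, Matrix.mulVec, dotProduct, Matrix.sub_apply, Matrix.one_apply,
      A1, Matrix.of_apply, sA_apply, tailL, LinearMap.funLeft_apply]
    rw [Fin.sum_univ_succ]
    have h : ∀ j : Fin N, ((if (0 : Fin (N+1)) = j.succ then (1:ℤ) else 0) - 1) * x j.succ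
        = -(x j.succ) := fun j => by
      rw [if_neg (fun h => (Fin.succ_ne_zero j) h.symm)]; ring
    simp [h, Finset.sum_neg_distrib]
  · have h := congrFun (tailL_key A x) i'
    simp only [tailL, LinearMap.funLeft_apply, Function.comp] at h
    rw [Fin.cons_succ]
    exact h

lemma one_sub_Ahat_mulVec {N : ℕ} [NeZero N] (A : Matrix (Fin N) (Fin N) ℤ)
    (u : Fin N → ℤ) :
    (1 - Ahat A).mulVec u = (1 - A).mulVec (jA N u) := by
  rw [jA_eq_mulVec, Matrix.mulVec_mulVec, ← one_sub_Ahat]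

lemma ext0_mem_colSpan {N : ℕ} [NeZero N] (A : Matrix (Fin N) (Fin N) ℤ) :
    ∀ v ∈ colSpan (1 - Ahat A), ext0 v ∈ colSpan (1 - A1 A) := by
  rintro _ ⟨u, rfl⟩
  refine ⟨Fin.cons 0 (jA N u), ?_⟩
  rw [mulVecLin_apply, mulVecLin_apply, mulVec_A1, tailL_cons, sA_jA, neg_zero, ext0_apply,
    one_sub_Ahat_mulVec]

/-- The linear map `ξ⁰` induced by `x ↦ (0,x)`. -/
def xiL {N : ℕ} [NeZero N] (A : Matrix (Fin N) (Fin N) ℤ) :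
    MQuot (1 - Ahat A) →ₗ[ℤ] MQuot (1 - A1 A) :=
  Submodule.liftQ _ ((colSpan (1 - A1 A)).mkQ ∘ₗ ext0) (by
    intro v hv
    simp only [LinearMap.mem_ker, LinearMap.comp_apply, Submodule.mkQ_apply,
      Submodule.Quotient.mk_eq_zero]
    exact ext0_mem_colSpan A v hv)

lemma xiL_mk {N : ℕ} [NeZero N] (A : Matrix (Fin N) (Fin N) ℤ) (x : Fin N → ℤ) :
    xiL A (Submodule.Quotient.mk x) = Submodule.Quotient.mk (ext0 x) := rfl

lemma xiL_bijective {N : ℕ} [NeZero N] (A : Matrix (Fin N) (Fin N) ℤ) :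
    Function.Bijective (xiL A) := by
  constructor
  · rw [← LinearMap.ker_eq_bot, eq_bot_iff]
    intro c hc
    obtain ⟨x, rfl⟩ := Submodule.Quotient.mk_surjective _ c
    rw [LinearMap.mem_ker, xiL_mk, Submodule.Quotient.mk_eq_zero] at hc
    obtain ⟨u, hu⟩ := hc
    rw [mulVecLin_apply, mulVec_A1, ext0_apply] at hu
    have h0 : -(sA N (tailL u)) = 0 := by
      have := congrFun hu 0; simpa using this
    have hx : (1 - A).mulVec (tailL u) = x := by
      funext i
      have := congrFun hu (Fin.succ i); simpa using this
    simp only [Submodule.mem_bot, Submodule.Quotient.mk_eq_zero]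
    refine ⟨tailL u, ?_⟩
    rw [mulVecLin_apply, one_sub_Ahat_mulVec, jA_eq']
    have hs : sA N (tailL u) = 0 := by linarith [h0]
    rw [hs, zero_smul, sub_zero, hx]
  · intro c
    obtain ⟨w, rfl⟩ := Submodule.Quotient.mk_surjective _ c
    refine ⟨Submodule.Quotient.mk (tailL w + (w 0) • (1 - A).mulVec (e1 N)), ?_⟩
    rw [xiL_mk, Submodule.Quotient.eq]
    refine ⟨Fin.cons 0 ((w 0) • e1 N), ?_⟩
    rw [mulVecLin_apply, mulVec_A1, tailL_cons]
    funext i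
    refine Fin.cases ?_ (fun i' => ?_) i
    · simp only [ext0_apply, Pi.sub_apply, Fin.cons_zero, _root_.map_smul, sA_e1,
        smul_eq_mul, mul_one, zero_sub]
    · simp only [ext0_apply, Pi.sub_apply, Fin.cons_succ, Pi.add_apply, Pi.smul_apply,
        smul_eq_mul, tailL, LinearMap.funLeft_apply, Matrix.mulVec_smul]
      ring

/-- The map `x ↦ (0,x)` sends `(I-Â)ℤ^N` into `(I-A₁)ℤ^{N+1}` and induces a group
isomorphism `ξ⁰ : ℤ^N/(I-Â)ℤ^N → ℤ^{N+1}/(I-A₁)ℤ^{N+1}` intertwining `ι̂_A` with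
`ι_{A₁}` and `q̂_A` with `q_{A₁}`, and sending `ι̂_A(1) + [1_N]` to `[1_{N+1}]`. -/
theorem stmt2 (N : ℕ) [NeZero N] (A : Matrix (Fin N) (Fin N) ℤ)
    (h01 : ZeroOneEntries A) (hirr : IsIrreducibleMatrix A)
    (hnp : ¬ IsPermutationMatrix A) :
    (∀ v ∈ colSpan (1 - Ahat A), ext0 v ∈ colSpan (1 - A1 A)) ∧
    ∃ ξ : MQuot (1 - Ahat A) ≃+ MQuot (1 - A1 A),
      (∀ x : Fin N → ℤ,
        ξ (Submodule.Quotient.mk x) = Submodule.Quotient.mk (ext0 x)) ∧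
      (∀ m : ℤ, ξ (iotaHat A m) = iotaA1 A m) ∧
      (∀ c, qA1 A (ξ c) = qHat A c) ∧
      ξ (iotaHat A 1 + Submodule.Quotient.mk (fun _ => 1)) =
        Submodule.Quotient.mk (fun _ => 1) := by
  refine ⟨ext0_mem_colSpan A, (LinearEquiv.ofBijective (xiL A) (xiL_bijective A)).toAddEquiv,
    fun x => xiL_mk A x, fun m => rfl, ?_, ?_⟩
  · intro c
    obtain ⟨x, rfl⟩ := Submodule.Quotient.mk_surjective _ c
    show qA1 A (xiL A (Submodule.Quotient.mk x)) = qHat A (Submodule.Quotient.mk x)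
    rw [xiL_mk]
    show Submodule.Quotient.mk (tailL (ext0 x)) = _
    rw [tailL_ext0]; rfl
  · show xiL A ((iotaHat A 1) + Submodule.Quotient.mk fun _ => 1) =
      Submodule.Quotient.mk fun _ => 1
    have h1 : iotaHat A 1 = Submodule.Quotient.mk ((1 - A).mulVec (e1 N)) := by
      simp [iotaHat, i1, Matrix.sub_mulVec]
    rw [h1, ← Submodule.Quotient.mk_add, xiL_mk, Submodule.Quotient.eq]
    refine ⟨Fin.cons 0 (e1 N), ?_⟩
    rw [mulVecLin_apply, mulVec_A1, tailL_cons, sA_e1]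
    funext i
    refine Fin.cases ?_ (fun i' => ?_) i
    · simp [ext0_apply]
    · simp [ext0_apply, tailL]

end
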